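/- The iteration F^{k+1} = (1-α) Ã F^k + α X, with 0 < α ≤ 1 and Ã symmetric with ‖Ã‖₂ ≤ 1 and αX fixed, is equivalent to one gradient descent step with stepsize α/2 on the objective F ↦ ‖F - X‖_F² + (1/α - 1)·tr(Fᵀ(I - Ã)F) started from F^k. -/

import Mathlib

open Matrix BigOperators
open scoped Matrix.Norms.L2Operator

/-- The iteration `F^{k+1} = (1-α)ÃF^k + αX` (0 < α ≤ 1, `Ã` symmetric with
`‖Ã‖₂ ≤ 1`) is one gradient descent step with stepsize `α/2` on
`J(F) = ‖F - X‖_F² + (1/α - 1)tr(Fᵀ(I - Ã)F)` started from `F^k`: the map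
`gradJ F = 2(F - X) + 2(1/α - 1)(I - Ã)F` is the gradient of `J` (characterized via
directional derivatives), and `(1-α)ÃF^k + αX = F^k - (α/2)·gradJ(F^k)`. -/
theorem aggregation_is_gradient_descent_step
    (n d : ℕ) (α : ℝ) (hα0 : 0 < α) (hα1 : α ≤ 1)
    (At : Matrix (Fin n) (Fin n) ℝ) (hsymm : At.IsSymm) (hnorm : ‖At‖ ≤ 1)
    (X Fk : Matrix (Fin n) (Fin d) ℝ)
    (J : Matrix (Fin n) (Fin d) ℝ → ℝ)
    (hJ : ∀ F, J F = (∑ i, ∑ j, (F i j - X i j) ^ 2)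
        + (1 / α - 1) * Matrix.trace (Fᵀ * ((1 - At) * F)))
    (gradJ : Matrix (Fin n) (Fin d) ℝ → Matrix (Fin n) (Fin d) ℝ)
    (hgradJ : ∀ F, gradJ F = (2 : ℝ) • (F - X) + (2 * (1 / α - 1)) • ((1 - At) * F)) :
    (∀ F V : Matrix (Fin n) (Fin d) ℝ,
      HasDerivAt (fun t : ℝ => J (F + t • V)) (∑ i, ∑ j, gradJ F i j * V i j) 0) ∧
    (1 - α) • (At * Fk) + α • X = Fk - (α / 2) • gradJ Fk := by
  set M : Matrix (Fin n) (Fin n) ℝ := 1 - At with hM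
  have hMsym : ∀ i k, M i k = M k i := by
    intro i k
    have := congrFun (congrFun hsymm k) i
    simp [Matrix.transpose_apply] at this
    simp [hM, Matrix.sub_apply, Matrix.one_apply, this, eq_comm]
  constructor
  · intro F V
    -- explicit form of t ↦ J (F + t • V)
    have key : (fun t : ℝ => J (F + t • V)) = fun t : ℝ =>
        (∑ i, ∑ j, (F i j + t * V i j - X i j) ^ 2)
        + (1 / α - 1) * (∑ j, ∑ i, (F i j + t * V i j) *
            ∑ k, M i k * (F k j + t * V k j)) := by
      funext t
      rw [hJ]
      simp [Matrix.trace, Matrix.diag, Matrix.mul_apply, Matrix.add_apply,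
        Matrix.smul_apply, smul_eq_mul, Matrix.transpose_apply]
    rw [key]
    have h1 : HasDerivAt (fun t : ℝ => ∑ i, ∑ j, (F i j + t * V i j - X i j) ^ 2)
        (∑ i, ∑ j, 2 * (F i j - X i j) * V i j) 0 := by
      have h : HasDerivAt (fun t : ℝ => ∑ i, ∑ j, (F i j + t * V i j - X i j) ^ 2)
          (∑ i, ∑ j, (2 : ℕ) * (F i j + (0:ℝ) * V i j - X i j) ^ (2 - 1) * V i j) 0 :=
        HasDerivAt.fun_sum fun i _ => HasDerivAt.fun_sum fun j _ =>
          (((hasDerivAt_mul_const (V i j)).const_add (F i j)).sub_const (X i j)).pow 2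
      simpa using h
    have h2 : HasDerivAt (fun t : ℝ => ∑ j, ∑ i, (F i j + t * V i j) *
          ∑ k, M i k * (F k j + t * V k j))
        (∑ j, ∑ i, (V i j * ∑ k, M i k * F k j + F i j * ∑ k, M i k * V k j)) 0 := by
      have h : HasDerivAt (fun t : ℝ => ∑ j, ∑ i, (F i j + t * V i j) *
            ∑ k, M i k * (F k j + t * V k j))
          (∑ j, ∑ i, (V i j * ∑ k, M i k * (F k j + (0:ℝ) * V k j)
            + (F i j + (0:ℝ) * V i j) * ∑ k, M i k * V k j)) 0 :=
        HasDerivAt.fun_sum fun j _ => HasDerivAt.fun_sum fun i _ =>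
          HasDerivAt.mul
            ((hasDerivAt_mul_const (V i j)).const_add (F i j))
            (HasDerivAt.fun_sum fun k _ =>
              ((hasDerivAt_mul_const (V k j)).const_add (F k j)).const_mul (M i k))
      simpa using h
    have h := h1.add (h2.const_mul (1 / α - 1))
    convert h using 1
    case e'_4 => rfl
    case e'_5 => rfl
    case e'_8 => rfl
    rw [show (∑ i, ∑ j, gradJ F i j * V i j) = ∑ j, ∑ i, gradJ F i j * V i j
      from Finset.sum_comm]
    -- symmetry identity
    have hswap : ∀ j, (∑ i, F i j * ∑ k, M i k * V k j)
        = ∑ i, V i j * ∑ k, M i k * F k j := by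
      intro j
      calc (∑ i, F i j * ∑ k, M i k * V k j)
          = ∑ i, ∑ k, F i j * (M i k * V k j) := by simp [Finset.mul_sum]
        _ = ∑ k, ∑ i, F i j * (M i k * V k j) := Finset.sum_comm
        _ = ∑ k, V k j * ∑ i, M k i * F i j := by
            refine Finset.sum_congr rfl fun k _ => ?_
            rw [Finset.mul_sum]
            exact Finset.sum_congr rfl fun i _ => by rw [hMsym i k]; ring
    have e2 : (1 / α - 1) * (∑ j, ∑ i, (V i j * ∑ k, M i k * F k j
          + F i j * ∑ k, M i k * V k j))
        = ∑ j, ∑ i, 2 * (1 / α - 1) * (∑ k, M i k * F k j) * V i j := by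
      rw [Finset.mul_sum]
      refine Finset.sum_congr rfl fun j _ => ?_
      rw [Finset.sum_add_distrib, hswap j, ← two_mul, ← mul_assoc, Finset.mul_sum]
      exact Finset.sum_congr rfl fun i _ => by ring
    rw [e2]
    rw [show (∑ i, ∑ j, 2 * (F i j - X i j) * V i j)
        = ∑ j, ∑ i, 2 * (F i j - X i j) * V i j from Finset.sum_comm]
    rw [← Finset.sum_add_distrib]
    simp only [hgradJ, Matrix.add_apply, Matrix.smul_apply, Matrix.sub_apply,
      Matrix.mul_apply, smul_eq_mul, ← hM]
    refine Finset.sum_congr rfl fun j _ => ?_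
    rw [← Finset.sum_add_distrib]
    refine Finset.sum_congr rfl fun i _ => ?_
    ring
  · rw [hgradJ]
    have hM' : (1 - At) * Fk = Fk - At * Fk := by
      rw [Matrix.sub_mul, Matrix.one_mul]
    rw [hM']
    ext i j
    simp only [Matrix.add_apply, Matrix.sub_apply, Matrix.smul_apply, smul_eq_mul]
    field_simp
    ring
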